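/- Let $k$ be an algebraically closed field, $R$ a $k$-algebra, and $X$, $Y$ left $R$-modules. Assume: (i) the endomorphism ring $\mathrm{End}_R(X)$ is commutative; (ii) $\mathrm{End}_R(X)$ is not spanned over $k$ by the identity (equivalently, its $k$-dimension is not $\le 1$); (iii) for every nonzero $R$-linear map $\varphi \colon X \to Y$ and every nonzero $T \in \mathrm{End}_R(X)$, the composite $\varphi \circ T$ is nonzero. Then for every $R$-submodule $\pi \subseteq Y$ such that $\mathrm{Hom}_R(X, \pi)$ is finite-dimensional as a $k$-vector space, one has $\mathrm{Hom}_R(X, \pi) = 0$. (This is the module-theoretic core of the paper's main theorem: with $X = \mathrm{ind}_K^G \sigma_1$, $Y = \mathrm{ind}_K^G \sigma$, hypothesis (i) is Herzig's commutativity of the spherical Hecke algebra, hypothesis (iii) is Herzig's injectivity of right composition with Hecke operators, and the finite-dimensionality of $\mathrm{Hom}_R(X,\pi)$ comes from admissibility of $\pi$; the conclusion shows $\mathrm{ind}_K^G\sigma$ has no irreducible admissible subrepresentation.) -/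

import Mathlib

/-- Module-theoretic core of the paper's main theorem: if `End_R X` is commutative,
not spanned over `k` by the identity, and right composition with any nonzero
endomorphism of `X` is injective on nonzero maps `X → Y`, then for any submodule
`π ⊆ Y` with `Hom_R(X, π)` finite-dimensional over `k`, we have `Hom_R(X, π) = 0`. -/
theorem stmt0 (k : Type*) [Field k] [IsAlgClosed k]
    (R : Type*) [Ring R] [Algebra k R]
    (X : Type*) [AddCommGroup X] [Module k X] [Module R X] [IsScalarTower k R X]
    (Y : Type*) [AddCommGroup Y] [Module k Y] [Module R Y] [IsScalarTower k R Y]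
    (hcomm : ∀ S T : Module.End R X, S * T = T * S)
    (hbig : ¬ ∀ S : Module.End R X, ∃ c : k, S = c • (1 : Module.End R X))
    (hinj : ∀ φ : X →ₗ[R] Y, φ ≠ 0 → ∀ T : Module.End R X, T ≠ 0 →
      φ.comp (T : X →ₗ[R] X) ≠ 0) :
    ∀ π : Submodule R Y, FiniteDimensional k (X →ₗ[R] π) →
      ∀ θ : X →ₗ[R] π, θ = 0 := by
  intro π hfd θ
  by_contra hθ
  -- the composite with the inclusion is a nonzero map `X → Y`
  set φ : X →ₗ[R] Y := π.subtype.comp θ with hφdef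
  have hφ : φ ≠ 0 := by
    intro h
    apply hθ
    ext x
    have hx : π.subtype (θ x) = 0 := DFunLike.congr_fun h x
    simpa using hx
  -- `End R X` embeds k-linearly into `Hom_R(X, π)` via `T ↦ θ ∘ T`
  let f : Module.End R X →ₗ[k] (X →ₗ[R] π) :=
    { toFun := fun T => θ.comp (T : X →ₗ[R] X)
      map_add' := fun S T => by ext x; simp
      map_smul' := fun c T => by ext x; simp }
  have hcompφ : ∀ T : Module.End R X, φ.comp (T : X →ₗ[R] X) = π.subtype.comp (f T) := by
    intro T; ext x; rfl
  have hfinj : Function.Injective f := by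
    intro S T hST
    by_contra hne
    have h1 : S - T ≠ 0 := sub_ne_zero.mpr hne
    have h2 : f (S - T) = 0 := by rw [map_sub, hST, sub_self]
    have h3 := hinj φ hφ (S - T) h1
    apply h3
    rw [hcompφ, h2]
    ext x; rfl
  haveI hEndFin : FiniteDimensional k (Module.End R X) :=
    FiniteDimensional.of_injective f hfinj
  haveI : Nontrivial (Module.End R X) := by
    rcases subsingleton_or_nontrivial (Module.End R X) with h | h
    · exact absurd (fun S => ⟨0, Subsingleton.elim _ _⟩) hbig
    · exact h
  -- `End R X` has no zero divisors
  haveI : NoZeroDivisors (Module.End R X) := by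
    constructor
    intro a b hab
    by_contra hcon
    push_neg at hcon
    obtain ⟨ha, hb⟩ := hcon
    have h1 : φ.comp (a : X →ₗ[R] X) ≠ 0 := hinj φ hφ a ha
    have h2 := hinj _ h1 b hb
    apply h2
    have : (φ.comp (a : X →ₗ[R] X)).comp (b : X →ₗ[R] X)
        = φ.comp ((a * b : Module.End R X) : X →ₗ[R] X) := by
      ext x; rfl
    rw [this, hab]
    ext x; simp
  -- every endomorphism is a scalar, contradiction
  apply hbig
  intro S
  have hint : IsIntegral k S := IsIntegral.of_finite k S
  have hq0 : minpoly k S ≠ 0 := minpoly.ne_zero hint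
  have hdeg : 0 < (minpoly k S).degree := minpoly.degree_pos hint
  obtain ⟨c, hc⟩ := IsAlgClosed.exists_root (minpoly k S) (by
    intro h
    rw [h] at hdeg
    exact lt_irrefl _ hdeg)
  have hdvd : (Polynomial.X - Polynomial.C c) ∣ minpoly k S :=
    Polynomial.dvd_iff_isRoot.mpr hc
  obtain ⟨r, hr⟩ := hdvd
  have haev : Polynomial.aeval S (minpoly k S) = 0 := minpoly.aeval k S
  rw [hr, map_mul] at haev
  have hXc : Polynomial.aeval S (Polynomial.X - Polynomial.C c)
      = S - algebraMap k (Module.End R X) c := by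
    simp [Polynomial.aeval_X, Polynomial.aeval_C]
  rcases mul_eq_zero.mp haev with h | h
  · refine ⟨c, ?_⟩
    rw [hXc] at h
    have : S = algebraMap k (Module.End R X) c := by
      rwa [sub_eq_zero] at h
    rw [this, Algebra.algebraMap_eq_smul_one]
  · exfalso
    have hrne : r ≠ 0 := by
      rintro rfl
      rw [mul_zero] at hr
      exact hq0 hr
    have hle := minpoly.degree_le_of_ne_zero k S hrne h
    have hlt : r.degree < (minpoly k S).degree := by
      rw [hr, Polynomial.degree_mul, Polynomial.degree_X_sub_C]
      have : r.degree ≠ ⊥ := Polynomial.degree_ne_bot.mpr hrne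
      cases hdr : r.degree with
      | bot => exact absurd hdr this
      | coe n =>
        have hn : ((n : ℕ) : WithBot ℕ) < ((1 + n : ℕ) : WithBot ℕ) :=
          WithBot.coe_lt_coe.mpr (Nat.lt_add_of_pos_left Nat.one_pos)
        exact hn
    exact absurd hle (not_le.mpr hlt)
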